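/- arXiv:2111.05146 — 3 statements merged into one kernel-verified Lean document; each statement's English description precedes it below -/
import Mathlib

section
/- For any d ≥ 1, β ≥ 0 and n ∈ ℕ, the random variable W_n := X_n + √λ_n·N(0,1) (with λ_n := ⟨Y_n²⟩_{Λ_n,β} and N(0,1) a standard normal independent of X_n) has a density given by f_{W_n}(x) = [exp(−x²/(2λ_n))/(√(2πλ_n)·⟨exp(Y_n²/(2λ_n))⟩_{Λ_n,β})]·⟨exp(xY_n/λ_n)⟩_{Λ_n,β} for all x ∈ ℝ. -/
open MeasureTheory Filter Topology
open scoped ENNReal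

noncomputable section

/-- The box `Λ_n = [-n,n]^d ∩ ℤ^d`. -/
def Lam (d n : ℕ) : Finset (Fin d → ℤ) :=
  Finset.Icc (fun _ => -(n : ℤ)) (fun _ => (n : ℤ))

/-- Spin configurations on `Λ_n` (a `Bool` per site; `true ↦ +1`, `false ↦ -1`). -/
abbrev Config (d n : ℕ) := {x // x ∈ Lam d n} → Bool

/-- The ±1 spin value at a site. -/
def spin {d n : ℕ} (σ : Config d n) (u : {x // x ∈ Lam d n}) : ℝ :=
  if σ u then 1 else -1

/-- ℓ¹ distance on `ℤ^d`. -/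
def dist1 {d : ℕ} (u v : Fin d → ℤ) : ℤ := ∑ i, |u i - v i|

/-- `Σ_{{u,v} ∈ E_n} σ_u σ_v`, the sum over (unordered) nearest-neighbour edges of `Λ_n`. -/
def edgeSum (d n : ℕ) (σ : Config d n) : ℝ :=
  (1 / 2) * ∑ u : {x // x ∈ Lam d n}, ∑ v : {x // x ∈ Lam d n},
    (if dist1 (u : Fin d → ℤ) (v : Fin d → ℤ) = 1 then spin σ u * spin σ v else 0)

/-- The number `|E_n|` of nearest-neighbour edges of `Λ_n`. -/
def nEdges (d n : ℕ) : ℕ :=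
  (Finset.univ.filter
    (fun p : {x // x ∈ Lam d n} × {x // x ∈ Lam d n} =>
      dist1 (p.1 : Fin d → ℤ) (p.2 : Fin d → ℤ) = 1)).card / 2

/-- Total magnetization `Y_n(σ) = Σ_{u ∈ Λ_n} σ_u`. -/
def Ymag {d n : ℕ} (σ : Config d n) : ℝ := ∑ u, spin σ u

/-- Free boundary condition Ising expectation `⟨f⟩_{Λ_n,β}` (zero external field). -/
def ev (d n : ℕ) (β : ℝ) (f : Config d n → ℝ) : ℝ :=
  (∑ σ : Config d n, f σ * Real.exp (β * edgeSum d n σ)) /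
    (∑ σ : Config d n, Real.exp (β * edgeSum d n σ))

/-- The spin at a point of `ℤ^d` (zero if the point is outside `Λ_n`). -/
def spinAt {d n : ℕ} (σ : Config d n) (x : Fin d → ℤ) : ℝ :=
  if h : x ∈ Lam d n then spin σ ⟨x, h⟩ else 0

/-- The finite-volume two-point function `⟨σ_0 σ_x⟩_{Λ_n,β}`. -/
def twoPoint (d n : ℕ) (β : ℝ) (x : Fin d → ℤ) : ℝ :=
  ev d n β (fun σ => spinAt σ 0 * spinAt σ x)

/-- The critical inverse temperature
`β_c(d) = sup {β ≥ 0 : Σ_{x ∈ ℤ^d} lim_n ⟨σ_0 σ_x⟩_{Λ_n,β} < ∞}`. -/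
def betac (d : ℕ) : ℝ :=
  sSup {β : ℝ | 0 ≤ β ∧ ∃ g : (Fin d → ℤ) → ℝ, Summable g ∧
    ∀ x, Tendsto (fun n => twoPoint d n β x) atTop (𝓝 (g x))}

/-- The second moment `⟨Y_n²⟩_{Λ_n,β}`. -/
def varY (d n : ℕ) (β : ℝ) : ℝ := ev d n β (fun σ => (Ymag σ) ^ 2)

/-- The fourth cumulant `u₄(Y_n) = ⟨Y_n⁴⟩ - 3⟨Y_n²⟩²`. -/
def u4 (d n : ℕ) (β : ℝ) : ℝ :=
  ev d n β (fun σ => (Ymag σ) ^ 4) - 3 * (varY d n β) ^ 2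

/-- Expectation `E_{Λ_n,β}[f(X_n)]` in the model perturbed by the critical
Curie–Weiss interaction, i.e. with Hamiltonian
`-β Σ σ_uσ_v - Y_n²/(2⟨Y_n²⟩_{Λ_n,β})`. -/
def evX (d n : ℕ) (β : ℝ) (f : ℝ → ℝ) : ℝ :=
  (∑ σ : Config d n, f (Ymag σ) *
      Real.exp (β * edgeSum d n σ + (Ymag σ) ^ 2 / (2 * varY d n β))) /
    (∑ σ : Config d n,
      Real.exp (β * edgeSum d n σ + (Ymag σ) ^ 2 / (2 * varY d n β)))

/-- The Ising probability measure on configurations. -/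
def isingMeasure (d n : ℕ) (β : ℝ) : Measure (Config d n) :=
  ∑ σ : Config d n,
    (ENNReal.ofReal (Real.exp (β * edgeSum d n σ) /
      ∑ τ : Config d n, Real.exp (β * edgeSum d n τ))) • Measure.dirac σ

/-- The probability measure of the Curie–Weiss–perturbed Ising model. -/
def pertMeasure (d n : ℕ) (β : ℝ) : Measure (Config d n) :=
  ∑ σ : Config d n,
    (ENNReal.ofReal (Real.exp (β * edgeSum d n σ + (Ymag σ) ^ 2 / (2 * varY d n β)) /
      ∑ τ : Config d n,
        Real.exp (β * edgeSum d n τ + (Ymag τ) ^ 2 / (2 * varY d n β)))) • Measure.dirac σ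

/-- The distribution of the total magnetization `Y_n`. -/
def lawY (d n : ℕ) (β : ℝ) : Measure ℝ := (isingMeasure d n β).map Ymag

/-- The distribution of `Y_n/√⟨Y_n²⟩_{Λ_n,β}`. -/
def lawYnorm (d n : ℕ) (β : ℝ) : Measure ℝ :=
  (lawY d n β).map (fun x => x / Real.sqrt (varY d n β))

/-- The distribution of `X_n`, the total magnetization of the perturbed model. -/
def lawX (d n : ℕ) (β : ℝ) : Measure ℝ := (pertMeasure d n β).map Ymag

/-- The distribution of `X_n/√(E_{Λ_n,β}(X_n²))`. -/
def lawXnorm (d n : ℕ) (β : ℝ) : Measure ℝ :=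
  (lawX d n β).map (fun x => x / Real.sqrt (evX d n β (fun y => y ^ 2)))

/-- The distribution of `W_n = X_n + √λ_n N(0,1)`, with `λ_n = ⟨Y_n²⟩_{Λ_n,β}` and
`N(0,1)` a standard normal independent of `X_n`. -/
def lawW (d n : ℕ) (β : ℝ) : Measure ℝ :=
  ((lawX d n β).prod (ProbabilityTheory.gaussianReal 0 (Real.toNNReal (varY d n β)))).map
    (fun p => p.1 + p.2)

/-- `d_n = ⟨Y_n²⟩⁻¹ (-u₄(Y_n)/4!)^{1/4}`. -/
def dcoef (d n : ℕ) (β : ℝ) : ℝ :=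
  (1 / varY d n β) * (-(u4 d n β) / 24) ^ ((1 : ℝ) / 4)

/-- `c_n = √⟨Y_n²⟩/(√(2π) ⟨exp(Y_n²/(2⟨Y_n²⟩))⟩) · (4!/(-u₄(Y_n)))^{1/4}`. -/
def ccoef (d n : ℕ) (β : ℝ) : ℝ :=
  (Real.sqrt (varY d n β) /
      (Real.sqrt (2 * Real.pi) *
        ev d n β (fun σ => Real.exp ((Ymag σ) ^ 2 / (2 * varY d n β))))) *
    (24 / (-(u4 d n β))) ^ ((1 : ℝ) / 4)

/-- The distribution of `d_n W_n`. -/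
def lawDW (d n : ℕ) (β : ℝ) : Measure ℝ := (lawW d n β).map (fun x => dcoef d n β * x)

/-- The distribution of `W̃_n = W_n/√(E_{Λ_n,β}(X_n²))`. -/
def lawWtilde (d n : ℕ) (β : ℝ) : Measure ℝ :=
  (lawW d n β).map (fun x => x / Real.sqrt (evX d n β (fun y => y ^ 2)))

/-- The moment generating function `z ↦ ⟨exp(zY_n)⟩_{Λ_n,β}` of `Y_n`. -/
def mgfY (d n : ℕ) (β : ℝ) (z : ℂ) : ℂ :=
  (∑ σ : Config d n, Complex.exp (z * (Ymag σ : ℂ)) * (Real.exp (β * edgeSum d n σ) : ℂ)) /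
    (∑ σ : Config d n, (Real.exp (β * edgeSum d n σ) : ℂ))

/-- `α : ℕ → ℝ` is the (nondecreasing, with multiplicity) listing of the Lee–Yang
zeros of `⟨exp(zY_n)⟩_{Λ_n,β}`: all its zeros are `{± i α_j : j ≥ 1}` with
`0 < α_1 ≤ α_2 ≤ ⋯`, and the multiplicity of the zero at `±iα_j` is the number of
indices `k` with `α_k = α_j`. -/
def IsLYListing (d n : ℕ) (β : ℝ) (α : ℕ → ℝ) : Prop :=
  (∀ j, 0 < α j) ∧ Monotone α ∧
    (∀ j, mgfY d n β (Complex.I * (α j : ℂ)) = 0) ∧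
    (∀ z : ℂ, mgfY d n β z = 0 →
      ∃ j, z = Complex.I * (α j : ℂ) ∨ z = -(Complex.I * (α j : ℂ))) ∧
    (∀ j, ∀ hA : AnalyticAt ℂ (mgfY d n β) (Complex.I * (α j : ℂ)),
      analyticOrderAt (mgfY d n β) (Complex.I * (α j : ℂ)) = ({k | α k = α j}.ncard : ℕ∞))

/-- Convergence in distribution (weak convergence of laws on `ℝ`):
integrals of every bounded continuous function converge. -/
def TendstoInDistr (μ : ℕ → Measure ℝ) (ν : Measure ℝ) : Prop :=
  ∀ f : BoundedContinuousFunction ℝ ℝ,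
    Tendsto (fun n => ∫ x, f x ∂(μ n)) atTop (𝓝 (∫ x, f x ∂ν))


/-- The partition function `Z_{Λ_n,β,h}` of the Ising model on `Λ_n` with free boundary
conditions and (complex) external field `h`. -/
def Zpart (d n : ℕ) (β : ℝ) (h : ℂ) : ℂ :=
  ∑ σ : Config d n, Complex.exp ((β * edgeSum d n σ : ℝ) + h * (Ymag σ : ℝ))

/-- `N₋(σ)`, the number of minus spins of the configuration `σ`. -/
def Nminus {d n : ℕ} (σ : Config d n) : ℕ :=
  (Finset.univ.filter (fun u => σ u = false)).card

/-- The average magnetization density `m_{Λ_n}(z) = ⟨Σ_{u∈Λ_n}σ_u⟩_{Λ_n,β,h}/|Λ_n|`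
viewed as a rational function of `z = e^{-2h}`. -/
def magDen (d n : ℕ) (β : ℝ) (z : ℂ) : ℂ :=
  (∑ σ : Config d n, (Ymag σ : ℂ) * (Real.exp (β * edgeSum d n σ) : ℂ) * z ^ Nminus σ) /
    (((Lam d n).card : ℂ) *
      ∑ σ : Config d n, (Real.exp (β * edgeSum d n σ) : ℂ) * z ^ Nminus σ)

/-- `θ : ℕ → ℝ` (restricted to `j < |Λ_n|`) lists, with multiplicity and in nondecreasing
order, the arguments of the `|Λ_n|` roots (all on the unit circle, by the Lee–Yang circle
theorem) of the polynomial `P_n(z) = Σ_σ e^{βΣσσ} z^{N₋(σ)}` associated with the partition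
function via `Z_{Λ_n,β,h} = e^{h|Λ_n|} P_n(e^{-2h})`. -/
def IsCircleRootListing (d n : ℕ) (β : ℝ) (θ : ℕ → ℝ) : Prop :=
  (∀ j, j < (Lam d n).card → 0 < θ j ∧ θ j < 2 * Real.pi) ∧
  (∀ j k, j ≤ k → k < (Lam d n).card → θ j ≤ θ k) ∧
  ∀ z : ℂ, (∑ σ : Config d n, (Real.exp (β * edgeSum d n σ) : ℂ) * z ^ Nminus σ) =
    (Real.exp (β * edgeSum d n (fun _ => false)) : ℂ) *
      ∏ j ∈ Finset.range ((Lam d n).card), (z - Complex.exp (Complex.I * (θ j : ℝ)))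

/-- The empirical distribution `μ_n` of the Lee–Yang zeros `exp(iθ_{j,n})`. -/
def empMeasure (d n : ℕ) (θ : ℕ → ℝ) : Measure ℂ :=
  (((Lam d n).card : ℝ≥0∞))⁻¹ •
    ∑ j ∈ Finset.range ((Lam d n).card), Measure.dirac (Complex.exp (Complex.I * (θ j : ℝ)))

/-- A random variable (here: its law `μ` on `ℝ`) is of Lee–Yang type if it is symmetric,
has a finite Gaussian exponential moment, and its moment generating function has only
pure imaginary zeros. -/
def IsLYType (μ : Measure ℝ) : Prop :=
  μ.map (fun x => -x) = μ ∧
  (∃ D : ℝ, 0 < D ∧ ∫⁻ x, ENNReal.ofReal (Real.exp (D * x ^ 2)) ∂μ < ⊤) ∧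
  ∀ z : ℂ, (∫ x : ℝ, Complex.exp (z * (x : ℝ)) ∂μ) = 0 → z.re = 0

/-- The density `f_W(x) = K e^{-κ₁ x⁴} ∏_{j≥1} (1 + x²/a_j²) e^{-x²/a_j²}` from Theorem 1;
indices `j` with `a_j = ∞` contribute a factor `1` (here `(∞ : ℝ≥0∞).toReal = 0` and
`x²/0 = 0` by convention, so the formula below implements exactly this). -/
def fW (K κ : ℝ) (a : ℕ → ℝ≥0∞) (x : ℝ) : ℝ :=
  K * Real.exp (-(κ * x ^ 4)) *
    ∏' j, ((1 + x ^ 2 / ((a j).toReal) ^ 2) * Real.exp (-(x ^ 2 / ((a j).toReal) ^ 2)))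

open ProbabilityTheory

lemma card_Lam (d n : ℕ) : (Lam d n).card = (2 * n + 1) ^ d := by
  rw [Lam, Pi.card_Icc, Finset.prod_const, Finset.card_univ, Fintype.card_fin]
  congr 1
  rw [Int.card_Icc]
  omega

lemma measurable_Ymag (d n : ℕ) : Measurable (fun σ : Config d n => Ymag σ) := by
  unfold Ymag spin
  exact Finset.measurable_sum _ fun u _ =>
    (measurable_from_top (f := fun b : Bool => if b then (1:ℝ) else -1)).comp
      (measurable_pi_apply u)

lemma Ymag_ne_zero {d n : ℕ} (σ : Config d n) : Ymag σ ≠ 0 := by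
  have h : Ymag σ = ((∑ u, (if σ u then (1:ℤ) else -1) : ℤ) : ℝ) := by
    rw [Ymag]
    push_cast
    refine Finset.sum_congr rfl fun u _ => ?_
    by_cases hu : σ u <;> simp [spin, hu]
  rw [h]
  intro hc
  have hk : (∑ u, (if σ u then (1:ℤ) else -1) : ℤ) = 0 := by exact_mod_cast hc
  have h2 : ((∑ u, (if σ u then (1:ℤ) else -1) : ℤ) : ZMod 2) = 0 := by rw [hk]; simp
  rw [Int.cast_sum] at h2
  have h3 : ∀ u : {x // x ∈ Lam d n},
      (((if σ u then (1:ℤ) else -1) : ℤ) : ZMod 2) = 1 := by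
    intro u; by_cases hu : σ u <;> simp [hu] <;> decide
  rw [Finset.sum_congr rfl (fun u _ => h3 u)] at h2
  simp only [Finset.sum_const, Finset.card_univ, Fintype.card_coe, nsmul_eq_mul, mul_one] at h2
  rw [card_Lam] at h2
  have : ((2 * n + 1 : ℕ) : ZMod 2) = 1 := by
    rw [Nat.cast_add, Nat.cast_mul, ZMod.natCast_self, zero_mul, zero_add, Nat.cast_one]
  rw [Nat.cast_pow, this, one_pow] at h2
  exact one_ne_zero h2

lemma varY_pos (d n : ℕ) (β : ℝ) : 0 < varY d n β := by
  rw [varY, ev]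
  apply div_pos
  · refine Finset.sum_pos (fun σ _ => mul_pos ?_ (Real.exp_pos _)) Finset.univ_nonempty
    exact lt_of_le_of_ne (sq_nonneg _) (Ne.symm (pow_ne_zero 2 (Ymag_ne_zero σ)))
  · exact Finset.sum_pos (fun σ _ => Real.exp_pos _) Finset.univ_nonempty

/-- **Density of `W_n = X_n + √λ_n N(0,1)`** (with `λ_n = ⟨Y_n²⟩_{Λ_n,β}`):
`f_{W_n}(x) = exp(-x²/(2λ_n))/(√(2πλ_n)⟨exp(Y_n²/(2λ_n))⟩_{Λ_n,β}) · ⟨exp(xY_n/λ_n)⟩_{Λ_n,β}`. -/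
theorem statement3 (d : ℕ) (hd : 1 ≤ d) (β : ℝ) (hβ : 0 ≤ β) (n : ℕ) :
    lawW d n β = volume.withDensity (fun x => ENNReal.ofReal
      (Real.exp (-x ^ 2 / (2 * varY d n β)) /
          (Real.sqrt (2 * Real.pi * varY d n β) *
            ev d n β (fun σ => Real.exp ((Ymag σ) ^ 2 / (2 * varY d n β)))) *
        ev d n β (fun σ => Real.exp (x * Ymag σ / varY d n β)))) := by
  classical
  have hV : 0 < varY d n β := varY_pos d n β
  set V := varY d n β with hVdef
  have hvne : V.toNNReal ≠ 0 := by
    simp only [ne_eq, Real.toNNReal_eq_zero, not_le]; exact hV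
  have hco : (NNReal.toReal (Real.toNNReal V)) = V := Real.coe_toNNReal V hV.le
  have hZ : 0 < ∑ σ : Config d n, Real.exp (β * edgeSum d n σ) :=
    Finset.sum_pos (fun _ _ => Real.exp_pos _) Finset.univ_nonempty
  have hZ' : 0 < ∑ σ : Config d n, Real.exp (β * edgeSum d n σ + Ymag σ ^ 2 / (2 * V)) :=
    Finset.sum_pos (fun _ _ => Real.exp_pos _) Finset.univ_nonempty
  have hsq : 0 < Real.sqrt (2 * Real.pi * V) :=
    Real.sqrt_pos.mpr (by positivity)
  have hmY : Measurable (fun σ : Config d n => Ymag σ) := measurable_Ymag d n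
  have hmadd : Measurable (fun p : ℝ × ℝ => p.1 + p.2) := measurable_fst.add measurable_snd
  -- pointwise density identity
  have key : ∀ x : ℝ,
      (∑ σ : Config d n,
        ENNReal.ofReal (Real.exp (β * edgeSum d n σ + Ymag σ ^ 2 / (2 * V)) /
          ∑ τ : Config d n, Real.exp (β * edgeSum d n τ + Ymag τ ^ 2 / (2 * V))) *
          gaussianPDF 0 V.toNNReal (x - Ymag σ))
      = ENNReal.ofReal
          (Real.exp (-x ^ 2 / (2 * V)) /
            (Real.sqrt (2 * Real.pi * V) *
              ev d n β (fun σ => Real.exp (Ymag σ ^ 2 / (2 * V)))) *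
            ev d n β (fun σ => Real.exp (x * Ymag σ / V))) := by
    intro x
    have h1 : ∀ σ : Config d n,
        ENNReal.ofReal (Real.exp (β * edgeSum d n σ + Ymag σ ^ 2 / (2 * V)) /
          ∑ τ : Config d n, Real.exp (β * edgeSum d n τ + Ymag τ ^ 2 / (2 * V))) *
          gaussianPDF 0 V.toNNReal (x - Ymag σ)
        = ENNReal.ofReal
            ((Real.exp (β * edgeSum d n σ + Ymag σ ^ 2 / (2 * V)) /
              ∑ τ : Config d n, Real.exp (β * edgeSum d n τ + Ymag τ ^ 2 / (2 * V))) *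
              gaussianPDFReal 0 V.toNNReal (x - Ymag σ)) := by
      intro σ
      rw [gaussianPDF, ← ENNReal.ofReal_mul (by positivity)]
    rw [Finset.sum_congr rfl fun σ _ => h1 σ,
      ← ENNReal.ofReal_sum_of_nonneg (fun σ _ =>
        mul_nonneg (by positivity) (gaussianPDFReal_nonneg _ _ _))]
    congr 1
    -- now a real identity
    have hH : (∑ σ : Config d n, Real.exp (Ymag σ ^ 2 / (2 * V)) * Real.exp (β * edgeSum d n σ))
        = ∑ σ : Config d n, Real.exp (β * edgeSum d n σ + Ymag σ ^ 2 / (2 * V)) := by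
      refine Finset.sum_congr rfl fun σ _ => ?_
      rw [← Real.exp_add, add_comm]
    simp only [ev, gaussianPDFReal, hco, hH, sub_zero]
    have hterm : ∀ σ : Config d n,
        Real.exp (β * edgeSum d n σ + Ymag σ ^ 2 / (2 * V)) /
          (∑ τ : Config d n, Real.exp (β * edgeSum d n τ + Ymag τ ^ 2 / (2 * V))) *
          ((Real.sqrt (2 * Real.pi * V))⁻¹ * Real.exp (-(x - Ymag σ) ^ 2 / (2 * V)))
        = Real.exp (-x ^ 2 / (2 * V)) *
            (Real.exp (x * Ymag σ / V) * Real.exp (β * edgeSum d n σ)) /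
            (Real.sqrt (2 * Real.pi * V) *
              ∑ τ : Config d n, Real.exp (β * edgeSum d n τ + Ymag τ ^ 2 / (2 * V))) := by
      intro σ
      have harg : β * edgeSum d n σ + Ymag σ ^ 2 / (2 * V) + -(x - Ymag σ) ^ 2 / (2 * V)
          = -x ^ 2 / (2 * V) + (x * Ymag σ / V + β * edgeSum d n σ) := by
        field_simp
        ring
      calc Real.exp (β * edgeSum d n σ + Ymag σ ^ 2 / (2 * V)) /
            (∑ τ : Config d n, Real.exp (β * edgeSum d n τ + Ymag τ ^ 2 / (2 * V))) *
            ((Real.sqrt (2 * Real.pi * V))⁻¹ * Real.exp (-(x - Ymag σ) ^ 2 / (2 * V)))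
          = Real.exp (β * edgeSum d n σ + Ymag σ ^ 2 / (2 * V) + -(x - Ymag σ) ^ 2 / (2 * V)) /
              (Real.sqrt (2 * Real.pi * V) *
                ∑ τ : Config d n, Real.exp (β * edgeSum d n τ + Ymag τ ^ 2 / (2 * V))) := by
            conv_rhs => rw [Real.exp_add]
            rw [div_eq_mul_inv, div_eq_mul_inv, mul_inv]; ring
        _ = Real.exp (-x ^ 2 / (2 * V) + (x * Ymag σ / V + β * edgeSum d n σ)) /
              (Real.sqrt (2 * Real.pi * V) *
                ∑ τ : Config d n, Real.exp (β * edgeSum d n τ + Ymag τ ^ 2 / (2 * V))) := by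
            rw [harg]
        _ = _ := by
            conv_lhs => rw [Real.exp_add, Real.exp_add]
    calc (∑ σ : Config d n,
          Real.exp (β * edgeSum d n σ + Ymag σ ^ 2 / (2 * V)) /
            (∑ τ : Config d n, Real.exp (β * edgeSum d n τ + Ymag τ ^ 2 / (2 * V))) *
            ((Real.sqrt (2 * Real.pi * V))⁻¹ * Real.exp (-(x - Ymag σ) ^ 2 / (2 * V))))
        = ∑ σ : Config d n, Real.exp (-x ^ 2 / (2 * V)) *
            (Real.exp (x * Ymag σ / V) * Real.exp (β * edgeSum d n σ)) /
            (Real.sqrt (2 * Real.pi * V) *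
              ∑ τ : Config d n, Real.exp (β * edgeSum d n τ + Ymag τ ^ 2 / (2 * V))) :=
          Finset.sum_congr rfl fun σ _ => hterm σ
      _ = Real.exp (-x ^ 2 / (2 * V)) *
            (∑ σ : Config d n, Real.exp (x * Ymag σ / V) * Real.exp (β * edgeSum d n σ)) /
            (Real.sqrt (2 * Real.pi * V) *
              ∑ τ : Config d n, Real.exp (β * edgeSum d n τ + Ymag τ ^ 2 / (2 * V))) := by
          rw [← Finset.sum_div, ← Finset.mul_sum]
      _ = Real.exp (-x ^ 2 / (2 * V)) /
            (Real.sqrt (2 * Real.pi * V) *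
              ((∑ τ : Config d n, Real.exp (β * edgeSum d n τ + Ymag τ ^ 2 / (2 * V))) /
                (∑ τ : Config d n, Real.exp (β * edgeSum d n τ)))) *
            ((∑ σ : Config d n, Real.exp (x * Ymag σ / V) * Real.exp (β * edgeSum d n σ)) /
              (∑ τ : Config d n, Real.exp (β * edgeSum d n τ))) := by
          conv_rhs => rw [div_mul_div_comm]
          congr 1
          rw [mul_assoc (Real.sqrt (2 * Real.pi * V)), div_mul_cancel₀ _ hZ.ne']
  -- measure-theoretic computation
  ext s hs
  have ht : MeasurableSet ((fun p : ℝ × ℝ => p.1 + p.2) ⁻¹' s) := hs.preimage hmadd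
  rw [lawW, Measure.map_apply hmadd hs, Measure.prod_apply ht, lawX,
    lintegral_map (measurable_measure_prodMk_left ht) hmY, pertMeasure,
    lintegral_finset_sum_measure]
  have hmix : Measurable fun y : ℝ =>
      gaussianReal 0 V.toNNReal (Prod.mk y ⁻¹' ((fun p : ℝ × ℝ => p.1 + p.2) ⁻¹' s)) :=
    measurable_measure_prodMk_left ht
  have hdirac : ∀ σ : Config d n,
      (∫⁻ τ, gaussianReal 0 V.toNNReal
          (Prod.mk (Ymag τ) ⁻¹' ((fun p : ℝ × ℝ => p.1 + p.2) ⁻¹' s)) ∂Measure.dirac σ)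
      = gaussianReal 0 V.toNNReal
          (Prod.mk (Ymag σ) ⁻¹' ((fun p : ℝ × ℝ => p.1 + p.2) ⁻¹' s)) :=
    fun σ => lintegral_dirac' σ (hmix.comp hmY)
  simp only [← hVdef, lintegral_smul_measure, hdirac, smul_eq_mul]
  have hG : ∀ Y : ℝ,
      gaussianReal 0 V.toNNReal (Prod.mk Y ⁻¹' ((fun p : ℝ × ℝ => p.1 + p.2) ⁻¹' s))
      = ∫⁻ x in s, gaussianPDF 0 V.toNNReal (x - Y) := by
    intro Y
    have hpre : (Prod.mk Y ⁻¹' ((fun p : ℝ × ℝ => p.1 + p.2) ⁻¹' s))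
        = (fun y => Y + y) ⁻¹' s := rfl
    rw [hpre, gaussianReal_of_var_ne_zero 0 hvne,
      withDensity_apply _ (hs.preimage (measurable_const_add Y))]
    have hf : Measurable fun x : ℝ => gaussianPDF 0 V.toNNReal (x - Y) := by
      simp only [gaussianPDF]
      exact ((measurable_gaussianPDFReal 0 _).comp (measurable_id.sub_const Y)).ennreal_ofReal
    have hmp := (measurePreserving_add_left (volume : Measure ℝ) Y).map_eq
    have h2 := setLIntegral_map (μ := (volume : Measure ℝ))
      (f := fun x : ℝ => gaussianPDF 0 V.toNNReal (x - Y)) (g := fun y : ℝ => Y + y)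
      hs hf (measurable_const_add Y)
    rw [hmp] at h2
    simp only [add_sub_cancel_left] at h2
    exact h2.symm
  simp only [hG]
  have hmeasf : ∀ σ : Config d n, Measurable fun x : ℝ => gaussianPDF 0 V.toNNReal (x - Ymag σ) := by
    intro σ
    simp only [gaussianPDF]
    exact ((measurable_gaussianPDFReal 0 _).comp (measurable_id.sub_const _)).ennreal_ofReal
  have hswap : ∑ σ : Config d n,
      ENNReal.ofReal (Real.exp (β * edgeSum d n σ + Ymag σ ^ 2 / (2 * V)) /
        ∑ τ : Config d n, Real.exp (β * edgeSum d n τ + Ymag τ ^ 2 / (2 * V))) *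
        ∫⁻ x in s, gaussianPDF 0 V.toNNReal (x - Ymag σ)
      = ∫⁻ x in s, ∑ σ : Config d n,
          ENNReal.ofReal (Real.exp (β * edgeSum d n σ + Ymag σ ^ 2 / (2 * V)) /
            ∑ τ : Config d n, Real.exp (β * edgeSum d n τ + Ymag τ ^ 2 / (2 * V))) *
            gaussianPDF 0 V.toNNReal (x - Ymag σ) := by
    rw [lintegral_finset_sum _ (fun σ _ => ((hmeasf σ).const_mul _))]
    refine Finset.sum_congr rfl fun σ _ => ?_
    rw [lintegral_const_mul _ (hmeasf σ)]
  rw [hswap, withDensity_apply _ hs]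
  exact setLIntegral_congr_fun hs (fun x _ => key x)


end
end

section
/- Fix d ≥ 1, β ≥ 0 and n ∈ ℕ, and assume (as guaranteed by the Lee–Yang circle theorem) that all |Λ_n| roots of the polynomial P_n lie on the unit circle, listed with multiplicity as exp(iθ_{1,n}),…,exp(iθ_{|Λ_n|,n}) with 0 < θ_{1,n} ≤ ⋯ ≤ θ_{|Λ_n|,n} < 2π. Then for every z in the open unit disk 𝔻, the average magnetization density satisfies m_{Λ_n}(z) = (1/|Λ_n|)·Σ_{j=1}^{|Λ_n|} (exp(iθ_{j,n}) + z)/(exp(iθ_{j,n}) − z). -/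
open MeasureTheory Filter Topology
open scoped ENNReal

noncomputable section

open Polynomial in
private lemma deriv_prod_X_sub_C' {ι : Type*} [DecidableEq ι] (s : Finset ι) (w : ι → ℂ) :
    derivative (∏ j ∈ s, (X - C (w j))) =
      ∑ j ∈ s, ∏ k ∈ s.erase j, (X - C (w k)) := by
  induction s using Finset.induction_on with
  | empty => simp
  | insert a s hx ih =>
    rw [Finset.prod_insert hx, derivative_mul, derivative_X_sub_C, one_mul, ih,
      Finset.sum_insert hx, Finset.erase_insert hx, Finset.mul_sum]
    congr 1
    refine Finset.sum_congr rfl fun j hj => ?_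
    rw [Finset.erase_insert_of_ne (by rintro rfl; exact hx hj),
      Finset.prod_insert (fun h => hx (Finset.mem_of_mem_erase h))]

/-- **Average magnetization density via Lee–Yang zeros:** if the `|Λ_n|` roots of `P_n`
are `exp(iθ_{1,n}), …, exp(iθ_{|Λ_n|,n})` (with multiplicity, nondecreasing in `(0,2π)`),
then for every `z` in the open unit disk,
`m_{Λ_n}(z) = |Λ_n|⁻¹ Σ_j (e^{iθ_j} + z)/(e^{iθ_j} - z)`. -/
theorem statement16 (d : ℕ) (hd : 1 ≤ d) (β : ℝ) (hβ : 0 ≤ β) (n : ℕ)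
    (θ : ℕ → ℝ) (hθ : IsCircleRootListing d n β θ) :
    ∀ z : ℂ, ‖z‖ < 1 →
      magDen d n β z = (((Lam d n).card : ℂ))⁻¹ *
        ∑ j ∈ Finset.range ((Lam d n).card),
          (Complex.exp (Complex.I * (θ j : ℝ)) + z) /
            (Complex.exp (Complex.I * (θ j : ℝ)) - z) := by
  classical
  obtain ⟨hrange, hmono, hprod⟩ := hθ
  intro z hz
  set m := (Lam d n).card with hm
  -- basic nonvanishing facts
  have hwabs : ∀ j : ℕ, ‖Complex.exp (Complex.I * (θ j : ℝ))‖ = 1 := by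
    intro j
    rw [Complex.norm_exp]
    simp
  set w : ℕ → ℂ := fun j => Complex.exp (Complex.I * (θ j : ℝ)) with hwdef
  have hzw : ∀ j : ℕ, z - w j ≠ 0 := by
    intro j h
    rw [sub_eq_zero] at h
    rw [h, hwabs j] at hz
    exact lt_irrefl 1 hz
  have hwz : ∀ j : ℕ, w j - z ≠ 0 := by
    intro j h
    exact hzw j (by rw [← neg_sub] at h; simpa using neg_eq_zero.mp h)
  set e : Config d n → ℂ := fun σ => (Real.exp (β * edgeSum d n σ) : ℂ) with hedef
  have he : ∀ σ, e σ ≠ 0 := fun σ => by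
    simp [hedef, Real.exp_ne_zero]
  set c : ℂ := e (fun _ => false) with hcdef
  have hc : c ≠ 0 := he _
  have hm0 : (m : ℂ) ≠ 0 := by
    have : (fun _ => (0:ℤ)) ∈ Lam d n := by
      simp only [Lam, Finset.mem_Icc]
      constructor <;> intro i <;> simp
    have hpos : 0 < m := Finset.card_pos.mpr ⟨_, this⟩
    exact_mod_cast Nat.cast_ne_zero.mpr hpos.ne'
  -- polynomials
  set Pp : Polynomial ℂ := ∑ σ : Config d n, Polynomial.C (e σ) * Polynomial.X ^ Nminus σ
    with hPp
  set Qp : Polynomial ℂ :=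
    Polynomial.C c * ∏ j ∈ Finset.range m, (Polynomial.X - Polynomial.C (w j)) with hQp
  have hPeval : ∀ x : ℂ, Pp.eval x = ∑ σ : Config d n, e σ * x ^ Nminus σ := by
    intro x; simp [hPp, Polynomial.eval_finset_sum]
  have hQeval : ∀ x : ℂ, Qp.eval x = c * ∏ j ∈ Finset.range m, (x - w j) := by
    intro x; simp [hQp, Polynomial.eval_prod]
  have hPQ : Pp = Qp := by
    apply Polynomial.funext
    intro x
    rw [hPeval, hQeval]
    exact hprod x
  -- derivative evaluations
  have hDP : ∀ x : ℂ, x * (Polynomial.derivative Pp).eval x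
      = ∑ σ : Config d n, e σ * (Nminus σ : ℂ) * x ^ Nminus σ := by
    intro x
    have hde : (Polynomial.derivative Pp).eval x
        = ∑ σ : Config d n, e σ * ((Nminus σ : ℂ) * x ^ (Nminus σ - 1)) := by
      simp [hPp, Polynomial.derivative_sum, Polynomial.derivative_C_mul,
        Polynomial.derivative_X_pow, Polynomial.eval_finset_sum]
    rw [hde, Finset.mul_sum]
    refine Finset.sum_congr rfl fun σ _ => ?_
    cases hN : Nminus σ with
    | zero => simp
    | succ k =>
      simp only [Nat.succ_sub_one, pow_succ]
      push_cast
      ring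
  have hDQ : (Polynomial.derivative Qp).eval z
      = c * ∑ j ∈ Finset.range m, ∏ k ∈ (Finset.range m).erase j, (z - w k) := by
    rw [hQp, Polynomial.derivative_C_mul, deriv_prod_X_sub_C']
    simp [Polynomial.eval_finset_sum, Polynomial.eval_prod]
  -- magnetization in terms of Nminus
  have hY : ∀ σ : Config d n, (Ymag σ : ℂ) = (m : ℂ) - 2 * (Nminus σ : ℂ) := by
    intro σ
    have hYr : Ymag σ = (m : ℝ) - 2 * (Nminus σ : ℝ) := by
      have h1 : Ymag σ
          = ∑ u : {x // x ∈ Lam d n}, ((1:ℝ) - 2 * (if σ u = false then 1 else 0)) := by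
        unfold Ymag spin
        refine Finset.sum_congr rfl fun u _ => ?_
        by_cases h : σ u <;> simp [h] <;> norm_num
      rw [h1, Finset.sum_sub_distrib, Finset.sum_const, ← Finset.mul_sum]
      simp [Nminus, Finset.sum_boole, Fintype.card_coe, hm]
    rw [hYr]
    push_cast
    ring
  -- the numerator
  have hnum : (∑ σ : Config d n, (Ymag σ : ℂ) * e σ * z ^ Nminus σ)
      = (m : ℂ) * Pp.eval z - 2 * (z * (Polynomial.derivative Pp).eval z) := by
    rw [hDP z, hPeval z, Finset.mul_sum, Finset.mul_sum, ← Finset.sum_sub_distrib]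
    refine Finset.sum_congr rfl fun σ _ => ?_
    rw [hY σ]
    ring
  set Pi : ℂ := ∏ j ∈ Finset.range m, (z - w j) with hPi
  set T : ℂ := ∑ j ∈ Finset.range m, (z - w j)⁻¹ with hT
  have hPi0 : Pi ≠ 0 := Finset.prod_ne_zero_iff.mpr fun j _ => hzw j
  have hS : (∑ j ∈ Finset.range m, ∏ k ∈ (Finset.range m).erase j, (z - w k)) = T * Pi := by
    rw [hT, Finset.sum_mul]
    refine Finset.sum_congr rfl fun j hj => ?_
    rw [hPi, ← Finset.mul_prod_erase _ _ hj, ← mul_assoc, inv_mul_cancel₀ (hzw j), one_mul]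
  have hRHS : (∑ j ∈ Finset.range m, (w j + z) / (w j - z)) = (m : ℂ) - 2 * z * T := by
    have hterm : ∀ j ∈ Finset.range m, (w j + z) / (w j - z) = 1 - 2 * z * (z - w j)⁻¹ := by
      intro j _
      field_simp [hzw j, hwz j]
      ring
    rw [Finset.sum_congr rfl hterm, Finset.sum_sub_distrib, Finset.sum_const,
      Finset.card_range, hT, ← Finset.mul_sum]
    simp
  calc magDen d n β z
      = ((m : ℂ) * Pp.eval z - 2 * (z * (Polynomial.derivative Pp).eval z))
          / ((m : ℂ) * Pp.eval z) := by
        rw [← hnum, hPeval z]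
        rfl
    _ = ((m : ℂ) * (c * Pi) - 2 * (z * (c * (T * Pi)))) / ((m : ℂ) * (c * Pi)) := by
        rw [hPQ, hQeval z, hDQ, hS]
    _ = (m : ℂ)⁻¹ * ((m : ℂ) - 2 * z * T) := by
        field_simp
    _ = (m : ℂ)⁻¹ * ∑ j ∈ Finset.range m, (w j + z) / (w j - z) := by rw [hRHS]



end
end

section
/- Fix d ≥ 1, β ≥ 0 and n ∈ ℕ, and assume (as guaranteed by the Lee–Yang circle theorem) that all |Λ_n| roots of P_n lie on the unit circle. Then m_{Λ_n} is a Herglotz function on the open unit disk 𝔻: Re m_{Λ_n}(z) > 0 for every z ∈ 𝔻, m_{Λ_n}(0) = 1, and |m_{Λ_n}(z)| ≤ (1+r)/(1−r) whenever |z| ≤ r < 1. -/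
open MeasureTheory Filter Topology
open scoped ENNReal

noncomputable section

lemma lam_card_pos (d n : ℕ) : 0 < (Lam d n).card := by
  apply Finset.card_pos.mpr
  apply Finset.nonempty_Icc.mpr
  intro i
  simp only
  omega

lemma kernel_re {w z : ℂ} (hw : ‖w‖ = 1) (hz : ‖z‖ < 1) :
    0 < ((w + z) / (w - z)).re := by
  have hwz : w ≠ z := by rintro rfl; rw [hw] at hz; exact lt_irrefl 1 hz
  have hne : w - z ≠ 0 := sub_ne_zero.mpr hwz
  have hpos : 0 < Complex.normSq (w - z) := Complex.normSq_pos.mpr hne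
  have h1 : Complex.normSq w = 1 := by
    rw [Complex.normSq_eq_norm_sq, hw]; norm_num
  have h2 : Complex.normSq z < 1 := by
    rw [Complex.normSq_eq_norm_sq]
    nlinarith [norm_nonneg z]
  have key : ((w + z) / (w - z)).re = (1 - Complex.normSq z) / Complex.normSq (w - z) := by
    rw [Complex.div_re, ← add_div]
    congr 1
    simp only [Complex.add_re, Complex.add_im, Complex.sub_re, Complex.sub_im]
    rw [← h1]
    simp only [Complex.normSq_apply]
    ring
  rw [key]
  exact div_pos (by linarith) hpos

lemma kernel_norm {w z : ℂ} (hw : ‖w‖ = 1) {r : ℝ} (hr : r < 1) (hz : ‖z‖ ≤ r) :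
    ‖(w + z) / (w - z)‖ ≤ (1 + r) / (1 - r) := by
  have hr0 : 0 ≤ r := le_trans (norm_nonneg z) hz
  have h1 : ‖w + z‖ ≤ 1 + r := le_trans (norm_add_le _ _) (by rw [hw]; linarith)
  have h2 : (1 - r) ≤ ‖w - z‖ := by
    have := norm_sub_norm_le w z
    linarith [hw ▸ this]
  rw [norm_div]
  exact div_le_div₀ (by linarith) h1 (by linarith) h2

lemma ymag_eq_card_sub {d n : ℕ} (σ : Config d n) :
    Ymag σ = ((Lam d n).card : ℝ) - 2 * (Nminus σ : ℝ) := by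
  classical
  have h1 : Ymag σ = ∑ u : {x // x ∈ Lam d n},
      (1 - 2 * (if σ u = false then (1:ℝ) else 0)) := by
    unfold Ymag
    apply Finset.sum_congr rfl
    intro u _
    unfold spin
    cases h : σ u <;> simp [h] <;> norm_num
  rw [h1, Finset.sum_sub_distrib, Finset.sum_const, ← Finset.mul_sum, Finset.sum_boole]
  unfold Nminus
  simp [Finset.card_univ, Fintype.card_coe]

lemma eval_derivative_prod (s : Finset ℕ) (g : ℕ → ℂ) (y : ℂ) :
    (Polynomial.derivative (∏ j ∈ s, (Polynomial.X - Polynomial.C (g j)))).eval y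
      = ∑ j ∈ s, ∏ k ∈ s.erase j, (y - g k) := by
  classical
  induction s using Finset.induction_on with
  | empty => simp
  | @insert a s ha ih =>
    rw [Finset.prod_insert ha, Polynomial.derivative_mul]
    simp only [Polynomial.derivative_sub, Polynomial.derivative_X, Polynomial.derivative_C,
      sub_zero, one_mul, Polynomial.eval_add, Polynomial.eval_mul, Polynomial.eval_sub,
      Polynomial.eval_X, Polynomial.eval_C, Polynomial.eval_prod, ih]
    rw [Finset.sum_insert ha, Finset.erase_insert ha, Finset.mul_sum]
    congr 1
    apply Finset.sum_congr rfl
    intro j hj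
    rw [Finset.erase_insert_of_ne (by rintro rfl; exact ha hj),
      Finset.prod_insert (fun h => ha (Finset.mem_of_mem_erase h))]

lemma magDen_eq (d n : ℕ) (β : ℝ) (θ : ℕ → ℝ) (hθ : IsCircleRootListing d n β θ)
    (z : ℂ) (hz : ‖z‖ < 1) :
    magDen d n β z = (((Lam d n).card : ℂ))⁻¹ *
      ∑ j ∈ Finset.range ((Lam d n).card),
        (Complex.exp (Complex.I * (θ j : ℝ)) + z) /
          (Complex.exp (Complex.I * (θ j : ℝ)) - z) := by
  classical
  obtain ⟨-, -, hP⟩ := hθ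
  unfold magDen
  set N := (Lam d n).card with hNdef
  set w : ℕ → ℂ := fun j => Complex.exp (Complex.I * (θ j : ℝ)) with hwdef
  set c : Config d n → ℂ := fun σ => (Real.exp (β * edgeSum d n σ) : ℂ) with hcdef
  set C0 : ℂ := (Real.exp (β * edgeSum d n (fun _ => false)) : ℂ) with hC0def
  have hwnorm : ∀ j, ‖w j‖ = 1 := by
    intro j
    simp [hwdef, Complex.norm_exp]
  have hzw : ∀ j, z - w j ≠ 0 := by
    intro j h
    rw [sub_eq_zero] at h
    rw [h, hwnorm j] at hz
    exact lt_irrefl 1 hz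
  have hC0ne : C0 ≠ 0 := by
    simp [hC0def, Real.exp_ne_zero]
  have hNpos : 0 < N := lam_card_pos d n
  have hNne : (N : ℂ) ≠ 0 := Nat.cast_ne_zero.mpr hNpos.ne'
  set Pc : Polynomial ℂ := ∑ σ : Config d n, Polynomial.C (c σ) * Polynomial.X ^ Nminus σ
    with hPcdef
  set Pr : Polynomial ℂ :=
    Polynomial.C C0 * ∏ j ∈ Finset.range N, (Polynomial.X - Polynomial.C (w j)) with hPrdef
  have hPcPr : Pc = Pr := by
    apply Polynomial.funext
    intro y
    rw [hPcdef, hPrdef]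
    simp only [Polynomial.eval_finset_sum, Polynomial.eval_mul, Polynomial.eval_C,
      Polynomial.eval_pow, Polynomial.eval_X, Polynomial.eval_prod, Polynomial.eval_sub]
    exact hP y
  have hdPc : Polynomial.derivative Pc =
      ∑ σ : Config d n,
        Polynomial.C (c σ) * (Polynomial.C ((Nminus σ : ℂ)) * Polynomial.X ^ (Nminus σ - 1)) := by
    rw [hPcdef, map_sum]
    apply Finset.sum_congr rfl
    intro σ _
    rw [Polynomial.derivative_C_mul, Polynomial.derivative_X_pow]
  have hdPr : ∀ y : ℂ, (Polynomial.derivative Pr).eval y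
      = C0 * ∑ j ∈ Finset.range N, ∏ k ∈ (Finset.range N).erase j, (y - w k) := by
    intro y
    rw [hPrdef, Polynomial.derivative_C_mul, Polynomial.eval_mul, Polynomial.eval_C,
      eval_derivative_prod]
  have hq : ∑ σ : Config d n, c σ * (Nminus σ : ℂ) * z ^ Nminus σ
      = z * (C0 * ∑ j ∈ Finset.range N, ∏ k ∈ (Finset.range N).erase j, (z - w k)) := by
    rw [← hdPr z, ← hPcPr, hdPc]
    rw [Polynomial.eval_finset_sum, Finset.mul_sum]
    apply Finset.sum_congr rfl
    intro σ _
    simp only [Polynomial.eval_mul, Polynomial.eval_C, Polynomial.eval_pow, Polynomial.eval_X]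
    rcases Nat.eq_zero_or_pos (Nminus σ) with h | h
    · simp [h]
    · have hsucc : Nminus σ - 1 + 1 = Nminus σ := Nat.succ_pred_eq_of_pos h
      calc c σ * (Nminus σ : ℂ) * z ^ Nminus σ
          = c σ * ((Nminus σ : ℂ) * (z ^ (Nminus σ - 1) * z)) := by
            rw [← pow_succ, hsucc]; ring
        _ = z * (c σ * ((Nminus σ : ℂ) * z ^ (Nminus σ - 1))) := by ring
  have hym : ∀ σ : Config d n, (Ymag σ : ℂ) = (N : ℂ) - 2 * (Nminus σ : ℂ) := by
    intro σ
    rw [ymag_eq_card_sub σ]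
    push_cast
    ring
  have h2 : ∀ j ∈ Finset.range N,
      (z - w j) * ∏ k ∈ (Finset.range N).erase j, (z - w k)
        = ∏ k ∈ Finset.range N, (z - w k) :=
    fun j hj => Finset.mul_prod_erase (Finset.range N) (fun k => z - w k) hj
  have hnum : ∑ σ : Config d n, (Ymag σ : ℂ) * c σ * z ^ Nminus σ
      = C0 * ∑ j ∈ Finset.range N,
          (-(w j + z)) * ∏ k ∈ (Finset.range N).erase j, (z - w k) := by
    calc ∑ σ : Config d n, (Ymag σ : ℂ) * c σ * z ^ Nminus σ
        = ∑ σ : Config d n, ((N : ℂ) * (c σ * z ^ Nminus σ)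
            - 2 * (c σ * (Nminus σ : ℂ) * z ^ Nminus σ)) := by
          apply Finset.sum_congr rfl
          intro σ _
          rw [hym σ]
          ring
      _ = (N : ℂ) * (∑ σ : Config d n, c σ * z ^ Nminus σ)
            - 2 * (∑ σ : Config d n, c σ * (Nminus σ : ℂ) * z ^ Nminus σ) := by
          rw [Finset.sum_sub_distrib, ← Finset.mul_sum, ← Finset.mul_sum]
      _ = (N : ℂ) * (C0 * ∏ k ∈ Finset.range N, (z - w k))
            - 2 * (z * (C0 * ∑ j ∈ Finset.range N,
                ∏ k ∈ (Finset.range N).erase j, (z - w k))) := by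
          rw [hP z, hq]
      _ = C0 * ∑ j ∈ Finset.range N,
            ((z - w j) * ∏ k ∈ (Finset.range N).erase j, (z - w k)
              - 2 * z * ∏ k ∈ (Finset.range N).erase j, (z - w k)) := by
          rw [Finset.sum_sub_distrib, Finset.sum_congr rfl h2, Finset.sum_const,
            Finset.card_range, nsmul_eq_mul, ← Finset.mul_sum]
          ring
      _ = C0 * ∑ j ∈ Finset.range N,
            (-(w j + z)) * ∏ k ∈ (Finset.range N).erase j, (z - w k) := by
          congr 1
          apply Finset.sum_congr rfl
          intro j _
          ring
  have hPne : (∏ k ∈ Finset.range N, (z - w k)) ≠ 0 :=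
    Finset.prod_ne_zero_iff.mpr (fun j _ => hzw j)
  have hsum : ∑ j ∈ Finset.range N,
        (-(w j + z)) * ∏ k ∈ (Finset.range N).erase j, (z - w k)
      = (∏ k ∈ Finset.range N, (z - w k)) * ∑ j ∈ Finset.range N, (w j + z) / (w j - z) := by
    rw [Finset.mul_sum]
    apply Finset.sum_congr rfl
    intro j hj
    rw [← h2 j hj]
    have hne : w j - z ≠ 0 := fun h => hzw j (by rw [← neg_sub] at h; simpa using neg_eq_zero.mp h)
    field_simp
    ring
  rw [hnum, hP z, hsum]
  simp only [hwdef] at hPne hzw ⊢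
  field_simp

/-- **`m_{Λ_n}` is a Herglotz function on the unit disk:** `Re m_{Λ_n}(z) > 0` on `𝔻`,
`m_{Λ_n}(0) = 1`, and `|m_{Λ_n}(z)| ≤ (1+r)/(1-r)` for `|z| ≤ r < 1`. -/
theorem statement17 (d : ℕ) (hd : 1 ≤ d) (β : ℝ) (hβ : 0 ≤ β) (n : ℕ)
    (θ : ℕ → ℝ) (hθ : IsCircleRootListing d n β θ) :
    (∀ z : ℂ, ‖z‖ < 1 → 0 < (magDen d n β z).re) ∧
      magDen d n β 0 = 1 ∧
      ∀ r : ℝ, r < 1 → ∀ z : ℂ, ‖z‖ ≤ r →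
        ‖magDen d n β z‖ ≤ (1 + r) / (1 - r) := by
  classical
  have hNpos : 0 < (Lam d n).card := lam_card_pos d n
  have hwnorm : ∀ j, ‖Complex.exp (Complex.I * (θ j : ℝ))‖ = 1 := by
    intro j
    simp [Complex.norm_exp]
  refine ⟨?_, ?_, ?_⟩
  · intro z hz
    rw [magDen_eq d n β θ hθ z hz]
    have hcast : (((Lam d n).card : ℂ))⁻¹
        = Complex.ofReal ((((Lam d n).card : ℝ))⁻¹) := by
      rw [Complex.ofReal_inv]
      norm_num
    rw [hcast, Complex.re_ofReal_mul]
    apply mul_pos (inv_pos.mpr (by exact_mod_cast hNpos))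
    rw [Complex.re_sum]
    apply Finset.sum_pos
    · intro j _
      exact kernel_re (hwnorm j) hz
    · exact Finset.nonempty_range_iff.mpr hNpos.ne'
  · rw [magDen_eq d n β θ hθ 0 (by simp)]
    have h1 : ∀ j ∈ Finset.range ((Lam d n).card),
        (Complex.exp (Complex.I * (θ j : ℝ)) + 0) /
          (Complex.exp (Complex.I * (θ j : ℝ)) - 0) = 1 := by
      intro j _
      rw [add_zero, sub_zero, div_self (Complex.exp_ne_zero _)]
    rw [Finset.sum_congr rfl h1, Finset.sum_const, Finset.card_range, nsmul_eq_mul, mul_one]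
    exact inv_mul_cancel₀ (Nat.cast_ne_zero.mpr hNpos.ne')
  · intro r hr z hzr
    have hz : ‖z‖ < 1 := lt_of_le_of_lt hzr hr
    rw [magDen_eq d n β θ hθ z hz, norm_mul]
    have h1 : ‖(((Lam d n).card : ℂ))⁻¹‖ = (((Lam d n).card : ℝ))⁻¹ := by
      rw [norm_inv]
      simp
    have h2 : ‖∑ j ∈ Finset.range ((Lam d n).card),
        (Complex.exp (Complex.I * (θ j : ℝ)) + z) /
          (Complex.exp (Complex.I * (θ j : ℝ)) - z)‖
        ≤ ((Lam d n).card : ℝ) * ((1 + r) / (1 - r)) := by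
      refine le_trans (norm_sum_le _ _) ?_
      have := Finset.sum_le_card_nsmul (Finset.range ((Lam d n).card))
        (fun j => ‖(Complex.exp (Complex.I * (θ j : ℝ)) + z) /
          (Complex.exp (Complex.I * (θ j : ℝ)) - z)‖) ((1 + r) / (1 - r))
        (fun j _ => kernel_norm (hwnorm j) hr hzr)
      rwa [Finset.card_range, nsmul_eq_mul] at this
    rw [h1]
    calc (((Lam d n).card : ℝ))⁻¹ * ‖_‖
        ≤ (((Lam d n).card : ℝ))⁻¹ * (((Lam d n).card : ℝ) * ((1 + r) / (1 - r))) := by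
          apply mul_le_mul_of_nonneg_left h2 (by positivity)
      _ = (1 + r) / (1 - r) := by
          rw [← mul_assoc, inv_mul_cancel₀ (by exact_mod_cast hNpos.ne'), one_mul]


end
end
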